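/- Let 0 < |n| < 1 and let (α,p) be in the interior of K_{|n|}. Then there exists ν₁ = ν₁(n,α,p) > 0 such that M_{α,p} ≥ ν₁ I₂, where I₂ is the 2×2 identity matrix; in particular M_{α,p} is positive definite. -/

import Mathlib

set_option maxHeartbeats 1000000


open MeasureTheory Set Filter Topology

noncomputable section

/-- The critical exponent `P₋(α) = 1 + (2/n²)(1-α)(α - √(α²-n²))`. -/
def Pminus (n a : ℝ) : ℝ := 1 + (2 / n ^ 2) * (1 - a) * (a - Real.sqrt (a ^ 2 - n ^ 2))

/-- The critical exponent `P₊(α) = 1 + (2/n²)(1-α)(α + √(α²-n²))`. -/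
def Pplus (n a : ℝ) : ℝ := 1 + (2 / n ^ 2) * (1 - a) * (a + Real.sqrt (a ^ 2 - n ^ 2))

/-- The admissible set `K_{|n|}` of pairs `(α,p)`. -/
def Kset (n : ℝ) : Set (ℝ × ℝ) :=
  if n = 0 then {q | 0 < q.1 ∧ q.1 ≤ 1 ∧ 1 ≤ q.1 * q.2}
  else {q | |n| ≤ q.1 ∧ q.1 ≤ 1 ∧ Pminus n q.1 ≤ q.2 ∧ q.2 ≤ Pplus n q.1}

/-- The symmetric matrix `Q_{α,p}(v,u)`, with `γ = n/α`, `Γ = (1-α)/(α(p-1))`,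
and the convention `Q_{1,1} = 0`. -/
def Qmat (n a p v u : ℝ) : Matrix (Fin 2) (Fin 2) ℝ :=
  if a = 1 ∧ p = 1 then 0 else
  (p - 1) • !![v ^ (n / a) * (1 + ((1 - a) / (a * (p - 1))) * (u / v - 1)),
      -(v ^ (n / a) + u ^ (n / a)) / 2;
      -(v ^ (n / a) + u ^ (n / a)) / 2,
      u ^ (n / a) * (1 + ((1 - a) / (a * (p - 1))) * (v / u - 1))]

/-- The symmetric matrix `M_{α,p}`, with `γ = n/α`, `Γ = (1-α)/(α(p-1))`,
and the convention `M_{1,1} = 0`. -/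
def Mmat (n a p : ℝ) : Matrix (Fin 2) (Fin 2) ℝ :=
  if a = 1 ∧ p = 1 then 0 else
  (p - 1) • !![(1 : ℝ), -((1 - a) / (a * (p - 1))) + (n / a) / 2;
      -((1 - a) / (a * (p - 1))) + (n / a) / 2,
      ((1 - a) / (a * (p - 1))) * (1 - n / a)]

/-- Lemma: properties of `M_{α,p}`: for `0 < |n| < 1` and `(α,p)` in the
interior of `K_{|n|}`, there exists `ν₁ = ν₁(n,α,p) > 0` with `M_{α,p} ≥ ν₁ I₂`; in
particular `M_{α,p}` is positive definite. -/
theorem Mmat_posdef_interior (n α p : ℝ) (hn0 : 0 < |n|) (hn1 : |n| < 1)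
    (hK : (α, p) ∈ interior (Kset n)) :
    ∃ ν₁ : ℝ, 0 < ν₁ ∧
      (Mmat n α p - ν₁ • (1 : Matrix (Fin 2) (Fin 2) ℝ)).PosSemidef ∧
      (Mmat n α p).PosDef := by
  have hn : n ≠ 0 := abs_pos.mp hn0
  rw [mem_interior_iff_mem_nhds, Metric.mem_nhds_iff] at hK
  obtain ⟨ε, hε, hball⟩ := hK
  have hmem : ∀ a' p' : ℝ, |a' - α| < ε → |p' - p| < ε →
      |n| ≤ a' ∧ a' ≤ 1 ∧ Pminus n a' ≤ p' ∧ p' ≤ Pplus n a' := by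
    intro a' p' h1 h2
    have : (a', p') ∈ Kset n := by
      apply hball
      rw [Metric.mem_ball, Prod.dist_eq]
      exact max_lt (by simpa [Real.dist_eq] using h1) (by simpa [Real.dist_eq] using h2)
    simpa [Kset, if_neg hn] using this
  have hεh : |(-(ε/2) : ℝ)| < ε := by rw [abs_neg, abs_of_pos (by linarith)]; linarith
  have hεh' : |(ε/2 : ℝ)| < ε := by rw [abs_of_pos (by linarith)]; linarith
  have hαn : |n| < α := by
    have := (hmem (α - ε/2) p (by simpa using hεh) (by simpa using hε)).1
    linarith
  have hα1 : α < 1 := by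
    have := (hmem (α + ε/2) p (by simpa using hεh') (by simpa using hε)).2.1
    linarith
  have hp1 : Pminus n α < p := by
    have := (hmem α (p - ε/2) (by simpa using hε) (by simpa using hεh)).2.2.1
    linarith
  have hp2 : p < Pplus n α := by
    have := (hmem α (p + ε/2) (by simpa using hε) (by simpa using hεh')).2.2.2
    linarith
  clear hmem hball hε hεh hεh'
  have hα0 : 0 < α := lt_trans hn0 hαn
  have hn2pos : 0 < n ^ 2 := by positivity
  have hn2 : n ^ 2 < α ^ 2 := by nlinarith [sq_abs n, abs_nonneg n]
  set β := Real.sqrt (α ^ 2 - n ^ 2) with hβ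
  have hβsq : β ^ 2 = α ^ 2 - n ^ 2 := Real.sq_sqrt (by linarith)
  have hβpos : 0 < β := Real.sqrt_pos.mpr (by linarith)
  have hβα : β < α := by nlinarith
  -- clear denominators in Pminus/Pplus bounds
  have hp1' : 2 * (1 - α) * (α - β) < (p - 1) * n ^ 2 := by
    rw [Pminus] at hp1
    have h : (2 / n ^ 2) * (1 - α) * (α - β) < p - 1 := by linarith
    calc 2 * (1 - α) * (α - β) = ((2 / n ^ 2) * (1 - α) * (α - β)) * n ^ 2 := by
          field_simp
      _ < (p - 1) * n ^ 2 := by exact mul_lt_mul_of_pos_right h hn2pos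
  have hp2' : (p - 1) * n ^ 2 < 2 * (1 - α) * (α + β) := by
    rw [Pplus] at hp2
    have h : p - 1 < (2 / n ^ 2) * (1 - α) * (α + β) := by linarith
    calc (p - 1) * n ^ 2 < ((2 / n ^ 2) * (1 - α) * (α + β)) * n ^ 2 :=
          mul_lt_mul_of_pos_right h hn2pos
      _ = 2 * (1 - α) * (α + β) := by field_simp
  have hD : 0 < p - 1 := by nlinarith
  -- key quadratic inequality
  have hkey : 0 < 4 * α * (1 - α) * (p - 1) - 4 * (1 - α) ^ 2 - n ^ 2 * (p - 1) ^ 2 := by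
    nlinarith [mul_pos (sub_pos.mpr hp1') (sub_pos.mpr hp2'), hn2pos, hβsq, sq_nonneg (p-1)]
  obtain ⟨G, hGdef⟩ : ∃ G : ℝ, G = (1 - α) / (α * (p - 1)) := ⟨_, rfl⟩
  obtain ⟨g, hgdef⟩ : ∃ g : ℝ, g = n / α := ⟨_, rfl⟩
  have hαD : 0 < α * (p - 1) := mul_pos hα0 hD
  have hGpos : 0 < G := hGdef ▸ div_pos (by linarith) hαD
  have hg1 : g < 1 := by
    rw [hgdef, div_lt_one hα0]
    calc n ≤ |n| := le_abs_self n
      _ < α := hαn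
  obtain ⟨c, hcdef⟩ : ∃ c : ℝ, c = -G + g / 2 := ⟨_, rfl⟩
  obtain ⟨d, hddef⟩ : ∃ d : ℝ, d = G * (1 - g) := ⟨_, rfl⟩
  have hdpos : 0 < d := hddef ▸ mul_pos hGpos (by linarith)
  have hdc : c ^ 2 < d := by
    have h4 : (0:ℝ) < 4 * α ^ 2 * (p - 1) ^ 2 := by positivity
    have heq : d - c ^ 2 =
        (4 * α * (1 - α) * (p - 1) - 4 * (1 - α) ^ 2 - n ^ 2 * (p - 1) ^ 2) /
          (4 * α ^ 2 * (p - 1) ^ 2) := by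
      rw [hddef, hcdef, hGdef, hgdef]
      field_simp
      ring
    linarith [div_pos hkey h4, heq.ge, heq.le]
  obtain ⟨e, hedef⟩ : ∃ e : ℝ, e = (d - c ^ 2) / (1 + d) := ⟨_, rfl⟩
  have h1d : (0:ℝ) < 1 + d := by linarith
  have hepos : 0 < e := hedef ▸ div_pos (by linarith) h1d
  have h1e : 0 < 1 - e := by
    have : e < 1 := by rw [hedef, div_lt_one h1d]; nlinarith [sq_nonneg c]
    linarith
  have hide : (1 - e) * (d - e) - c ^ 2 = e ^ 2 := by
    have he1 : e * (1 + d) = d - c ^ 2 := by rw [hedef]; field_simp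
    linear_combination (-1 : ℝ) * he1
  have hne : ¬ (α = 1 ∧ p = 1) := fun h => absurd h.1 (by linarith : α ≠ 1)
  have hherm : (Mmat n α p).IsHermitian := by
    rw [Matrix.IsHermitian]
    ext i j
    fin_cases i <;> fin_cases j <;>
      simp [Mmat, if_neg hne, Matrix.conjTranspose_apply]
  refine ⟨(p - 1) * e, mul_pos hD hepos, ?_, ?_⟩
  · refine Matrix.PosSemidef.of_dotProduct_mulVec_nonneg ?_ ?_
    · simp only [Matrix.IsHermitian, Matrix.conjTranspose_sub, Matrix.conjTranspose_smul, hherm]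
      simp
      ext i j
      fin_cases i <;> fin_cases j <;> simp [Mmat, if_neg hne]
    · intro x
      simp only [Mmat, if_neg hne, Matrix.sub_mulVec, Matrix.smul_mulVec,
        Matrix.mulVec, dotProduct, Fin.sum_univ_two, Matrix.cons_val', Matrix.cons_val_zero,
        Matrix.cons_val_one, Matrix.head_cons, Matrix.head_fin_const, Matrix.empty_val',
        Matrix.cons_val_fin_one, Matrix.one_apply, Pi.smul_apply, Pi.sub_apply, smul_eq_mul,
        star_trivial, Matrix.one_mulVec]
      simp only [Matrix.sub_apply, Matrix.smul_apply, Matrix.one_apply, Matrix.cons_val',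
        Matrix.cons_val_zero, Matrix.cons_val_one, Matrix.head_cons, Matrix.empty_val',
        Matrix.cons_val_fin_one, Matrix.head_fin_const, smul_eq_mul]
      norm_num
      rw [← hGdef, ← hgdef, ← hcdef, ← hddef]
      have key : ∀ y z : ℝ, (1 - e) * (y * ((p - 1 - (p - 1) * e) * y + (p - 1) * c * z) +
          z * ((p - 1) * c * y + ((p - 1) * d - (p - 1) * e) * z))
          = (p - 1) * (((1 - e) * y + c * z) ^ 2 + (e * z) ^ 2) := by
        intro y z
        linear_combination ((p - 1) * z ^ 2) * hide
      nlinarith [key (x 0) (x 1), h1e,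
        mul_nonneg hD.le (add_nonneg (sq_nonneg ((1 - e) * x 0 + c * x 1)) (sq_nonneg (e * x 1)))]
  · refine Matrix.PosDef.of_dotProduct_mulVec_pos hherm (fun x hx => ?_)
    simp only [Mmat, if_neg hne, Matrix.mulVec, dotProduct, Fin.sum_univ_two,
      Matrix.smul_apply, Matrix.cons_val', Matrix.cons_val_zero, Matrix.cons_val_one,
      Matrix.head_cons, Matrix.empty_val', Matrix.cons_val_fin_one, Matrix.head_fin_const,
      smul_eq_mul, star_trivial, Matrix.smul_mulVec, Pi.smul_apply]
    rw [← hGdef, ← hgdef, ← hcdef, ← hddef]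
    norm_num [Matrix.cons_val_zero, Matrix.cons_val_one, Matrix.head_cons, Matrix.cons_val',
      Matrix.empty_val', Matrix.cons_val_fin_one, Matrix.head_fin_const, Matrix.of_apply]
    have hx01 : x 0 ≠ 0 ∨ x 1 ≠ 0 := by
      by_contra h
      push_neg at h
      apply hx
      funext i
      fin_cases i <;> simp [h.1, h.2]
    have hsq : 0 < x 0 ^ 2 + x 1 ^ 2 := by
      rcases hx01 with h | h <;> positivity
    by_cases h1 : x 1 = 0
    · have h0 : x 0 ≠ 0 := by
        rcases hx01 with h | h
        · exact h
        · exact absurd h1 h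
      have h0sq : 0 < x 0 ^ 2 := by rcases lt_or_gt_of_ne h0 with h' | h' <;> nlinarith
      simp only [h1]
      nlinarith [mul_pos hD h0sq]
    · have h1sq : 0 < x 1 ^ 2 := by rcases lt_or_gt_of_ne h1 with h' | h' <;> nlinarith
      nlinarith [mul_nonneg hD.le (sq_nonneg (x 0 + c * x 1)),
        mul_pos (mul_pos hD (sub_pos.mpr hdc)) h1sq]
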